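/- Let θ = 2cos(2π/7), θ₁ = 2cos(4π/7), θ₂ = 2cos(6π/7), and define a = (θ₂² - θ²)(θ² - θ₁²), b = (θ₂² - θ²)(θ₁ - θ) + (θ₂ - θ)(θ₁² - θ²), c = (θ - θ₂)(θ₁ - θ). Then b² - 4·a·c = 49. -/
import Mathlib

theorem stmt_12 :
    let θ := 2 * Real.cos (2 * Real.pi / 7)
    let θ₁ := 2 * Real.cos (4 * Real.pi / 7)
    let θ₂ := 2 * Real.cos (6 * Real.pi / 7)
    let a := (θ₂ ^ 2 - θ ^ 2) * (θ ^ 2 - θ₁ ^ 2)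
    let b := (θ₂ ^ 2 - θ ^ 2) * (θ₁ - θ) + (θ₂ - θ) * (θ₁ ^ 2 - θ ^ 2)
    let c := (θ - θ₂) * (θ₁ - θ)
    b ^ 2 - 4 * a * c = 49 := by
  intro θ θ₁ θ₂ a b c
  have pi_pos := Real.pi_pos
  set x := 2 * Real.pi / 7 with hx
  -- θ₁ = θ² - 2
  have h1 : θ₁ = θ ^ 2 - 2 := by
    have : (4 : ℝ) * Real.pi / 7 = 2 * x := by rw [hx]; ring
    show 2 * Real.cos (4 * Real.pi / 7) = _
    rw [this, Real.cos_two_mul]; show _ = (2 * Real.cos x) ^ 2 - 2; ring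
  -- θ₂ = θ³ - 3θ  (triple angle)
  have h2 : θ₂ = θ ^ 3 - 3 * θ := by
    have : (6 : ℝ) * Real.pi / 7 = 3 * x := by rw [hx]; ring
    show 2 * Real.cos (6 * Real.pi / 7) = _
    rw [this, Real.cos_three_mul]; show _ = (2 * Real.cos x) ^ 3 - 3 * (2 * Real.cos x); ring
  -- θ₂ = θ₁² - 2  (since cos(8π/7) = cos(6π/7))
  have h3 : θ₂ = θ₁ ^ 2 - 2 := by
    have he : Real.cos (6 * Real.pi / 7) = Real.cos (2 * (4 * Real.pi / 7)) := by
      have : (2 : ℝ) * (4 * Real.pi / 7) = 2 * Real.pi - 6 * Real.pi / 7 := by ring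
      rw [this, Real.cos_two_pi_sub]
    show 2 * Real.cos (6 * Real.pi / 7) = _
    rw [he, Real.cos_two_mul]
    show _ = (2 * Real.cos (4 * Real.pi / 7)) ^ 2 - 2; ring
  -- θ ≠ 2
  have hne : θ ≠ 2 := by
    have hx0 : x ≠ 0 := by positivity
    have hxlt : x < 2 * Real.pi := by
      rw [hx]; nlinarith
    have hcos : Real.cos x ≠ 1 := by
      intro hc
      have := (Real.cos_eq_one_iff_of_lt_of_lt (by linarith : -(2 * Real.pi) < x) hxlt).mp hc
      exact hx0 this
    intro h
    apply hcos
    have : Real.cos x = 1 := by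
      have : θ = 2 * Real.cos x := rfl
      nlinarith [this, h]
    exact this
  -- minimal polynomial relation
  have hmin : θ ^ 3 + θ ^ 2 - 2 * θ - 1 = 0 := by
    have key : (θ - 2) * (θ ^ 3 + θ ^ 2 - 2 * θ - 1) = 0 := by
      have := h3
      rw [h1, h2] at this
      nlinarith [this]
    rcases mul_eq_zero.mp key with h | h
    · exact absurd (by linarith) hne
    · exact h
  show b ^ 2 - 4 * a * c = 49
  have ha : a = (θ₂ ^ 2 - θ ^ 2) * (θ ^ 2 - θ₁ ^ 2) := rfl
  have hb : b = (θ₂ ^ 2 - θ ^ 2) * (θ₁ - θ) + (θ₂ - θ) * (θ₁ ^ 2 - θ ^ 2) := rfl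
  have hc : c = (θ - θ₂) * (θ₁ - θ) := rfl
  rw [ha, hb, hc, h1, h2]
  linear_combination (49 - 98*θ - 11*θ^2 + 485*θ^3 - 311*θ^4 - 568*θ^5 + 446*θ^6 + 245*θ^7 - 244*θ^8 - 29*θ^9 + 58*θ^10 - 5*θ^11 - 5*θ^12 + θ^13) * hmin
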